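/- Let λ be a partition of 2p in which every odd part occurs with even multiplicity, and assume λ has distinct column lengths; let 0 = k_0 < k_1 < ⋯ < k_m be the column lengths of λ listed increasingly. Then the number of connected components of Γ_CI(λ;p,p) equals #syd_CI(λ;p,p) (the graph has no edges) and equals ∏_{1 ≤ s ≤ m, λ_{k_s} even} (1 + k_s − k_{s−1}). -/

import Mathlib

open Finset

/-- A partition of `n`, given by the function `l` listing its parts in weakly
decreasing order: `l j = λ_j` is the `j`-th part for `1 ≤ j ≤ len`, and
`l j = 0` for `j > len`. -/
structure PartitionData : Type where
  l : ℕ → ℕ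
  len : ℕ
  anti : ∀ j, 1 ≤ j → l (j + 1) ≤ l j
  pos : ∀ j, 1 ≤ j → (0 < l j ↔ j ≤ len)

namespace PartitionData

/-- The multiplicity `m(i)` of `i` as a part of the partition. -/
def mult (P : PartitionData) (i : ℕ) : ℕ :=
  ((Finset.Icc 1 P.len).filter (fun j => P.l j = i)).card

/-- The finite set of (distinct) parts of the partition. -/
def partsSet (P : PartitionData) : Finset ℕ :=
  (Finset.Icc 1 P.len).image P.l

/-- The sum of the parts (i.e. the number `n` the partition partitions). -/
def boxSum (P : PartitionData) : ℕ := ∑ j ∈ Finset.Icc 1 P.len, P.l j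

/-- The number of odd parts of the partition. -/
def oddCount (P : PartitionData) : ℕ :=
  ((Finset.Icc 1 P.len).filter (fun j => Odd (P.l j))).card

end PartitionData

/-- A signed Young diagram of shape `P` and signature `(p, q)`, encoded by the
function `f` sending each part length `i` to `m_T⁺(i)`, the number of rows of
length `i` whose leading sign is `+`.  A row of length `i` with leading sign
`+` has `(i+1)/2` plus-boxes and `i/2` minus-boxes, and vice versa. -/
structure SYD (P : PartitionData) (p q : ℕ) : Type where
  f : ℕ → ℕ
  le_mult : ∀ i, f i ≤ P.mult i
  plus_eq : ∑ i ∈ P.partsSet, (f i * ((i + 1) / 2) + (P.mult i - f i) * (i / 2)) = p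
  minus_eq : ∑ i ∈ P.partsSet, (f i * (i / 2) + (P.mult i - f i) * ((i + 1) / 2)) = q

/-- `i` and `j` are consecutive distinct parts: `i > j` with no part strictly
in between (so if the distinct parts are `i_1 > ⋯ > i_k`, the pairs are
`(i_r, i_{r+1})`). -/
def Consec (P : PartitionData) (i j : ℕ) : Prop :=
  i ∈ P.partsSet ∧ j ∈ P.partsSet ∧ j < i ∧ ∀ x ∈ P.partsSet, ¬ (j < x ∧ x < i)

/-- `j` is the smallest part `i_k`. -/
def IsMinPart (P : PartitionData) (j : ℕ) : Prop :=
  j ∈ P.partsSet ∧ ∀ x ∈ P.partsSet, j ≤ x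

/-- Adjacency of signed Young diagrams with step `c`:
`π(T) - π(T') ∈ {±c(e_r - e_{r+1})} ∪ {±c e_k}` in the coordinates indexed by
the distinct parts `i_1 > ⋯ > i_k`. -/
def AdjRel (P : PartitionData) {p q : ℕ} (c : ℕ) (T T' : SYD P p q) : Prop :=
  (∃ i j, Consec P i j ∧ (∀ x, x ≠ i → x ≠ j → T.f x = T'.f x) ∧
    ((T.f i = T'.f i + c ∧ T'.f j = T.f j + c) ∨
      (T'.f i = T.f i + c ∧ T.f j = T'.f j + c)))
  ∨ (∃ j, IsMinPart P j ∧ (∀ x, x ≠ j → T.f x = T'.f x) ∧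
      (T.f j = T'.f j + c ∨ T'.f j = T.f j + c))

/-- The orbit graph `Γ(λ;p,q)` (type AIII). -/
def orbitGraph (P : PartitionData) (p q : ℕ) : SimpleGraph (SYD P p q) :=
  SimpleGraph.fromRel (AdjRel P 1)

/-- Type BDI: `m_T⁺(i) = m(i)/2` for every even part length `i`. -/
def SYD.IsBDI {P : PartitionData} {p q : ℕ} (T : SYD P p q) : Prop :=
  ∀ i, Even i → 2 * T.f i = P.mult i

/-- Type CI: `p = q` and `m_T⁺(i) = m(i)/2` for every odd part length `i`. -/
def SYD.IsCI {P : PartitionData} {p q : ℕ} (T : SYD P p q) : Prop :=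
  p = q ∧ ∀ i, Odd i → 2 * T.f i = P.mult i

/-- Type CII: `p`, `q` even, `m_T⁺(i) = m(i)/2` for every even part length `i`,
and `m(i)`, `m_T⁺(i)` even for every odd part length `i`. -/
def SYD.IsCII {P : PartitionData} {p q : ℕ} (T : SYD P p q) : Prop :=
  Even p ∧ Even q ∧ (∀ i, Even i → 2 * T.f i = P.mult i) ∧
    ∀ i, Odd i → Even (P.mult i) ∧ Even (T.f i)

/-- Type DIII: `p = q`, `m_T⁺(i) = m(i)/2` for every odd part length `i`, and
`m(i)`, `m_T⁺(i)` even for every even part length `i`. -/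
def SYD.IsDIII {P : PartitionData} {p q : ℕ} (T : SYD P p q) : Prop :=
  p = q ∧ (∀ i, Odd i → 2 * T.f i = P.mult i) ∧
    ∀ i, Even i → Even (P.mult i) ∧ Even (T.f i)

/-- The orbit graph `Γ_X(λ;p,q)` on the vertices `syd_X(λ;p,q)` (given by the
predicate `Pr`), with step `c` (`c = 1` for X = BDI, CI and `c = 2` for
X = CII, DIII). -/
def orbitGraphX (P : PartitionData) (p q c : ℕ) (Pr : SYD P p q → Prop) :
    SimpleGraph {T : SYD P p q // Pr T} :=
  SimpleGraph.fromRel (fun T T' => AdjRel P c T.1 T'.1)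

/-- The set of column lengths of `λ`: those `h ≥ 1` with `λ_h - λ_{h+1} > 0`. -/
def colSet (P : PartitionData) : Finset ℕ :=
  (Finset.Icc 1 P.len).filter (fun h => P.l (h + 1) < P.l h)


namespace PartitionData
variable (P : PartitionData)

lemma l_anti' : ∀ a b, 1 ≤ a → a ≤ b → P.l b ≤ P.l a := by
  intro a b ha hab
  induction b with
  | zero => omega
  | succ n ih =>
    rcases Nat.eq_or_lt_of_le hab with h | h
    · rw [← h]
    · exact le_trans (P.anti n (by omega)) (ih (by omega))

lemma l_zero_of_gt {j : ℕ} (h : P.len < j) : P.l j = 0 := by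
  by_contra hne
  have h1 : 1 ≤ j := by omega
  have := (P.pos j h1).mp (by omega)
  omega

lemma mem_partsSet {i : ℕ} : i ∈ P.partsSet ↔ ∃ j, 1 ≤ j ∧ j ≤ P.len ∧ P.l j = i := by
  simp only [partsSet, Finset.mem_image, Finset.mem_Icc]
  tauto

lemma partsSet_pos {i : ℕ} (h : i ∈ P.partsSet) : 0 < i := by
  rw [mem_partsSet] at h
  obtain ⟨j, h1, h2, h3⟩ := h
  have := (P.pos j h1).mpr h2
  omega

lemma mult_eq_zero {i : ℕ} (h : i ∉ P.partsSet) : P.mult i = 0 := by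
  rw [mem_partsSet] at h
  push_neg at h
  rw [mult, Finset.card_eq_zero, Finset.filter_eq_empty_iff]
  intro j hj
  simp only [Finset.mem_Icc] at hj
  exact fun he => absurd he (by intro he'; exact absurd he' (by exact h j hj.1 hj.2))

lemma boxSum_eq : P.boxSum = ∑ i ∈ P.partsSet, P.mult i * i := by
  rw [boxSum]
  rw [show (∑ j ∈ Finset.Icc 1 P.len, P.l j) = ∑ j ∈ Finset.Icc 1 P.len, id (P.l j) from rfl]
  rw [Finset.sum_comp]
  simp [mult, partsSet, mul_comm]

end PartitionData

lemma mem_colSet_iff (P : PartitionData) {h : ℕ} :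
    h ∈ colSet P ↔ 1 ≤ h ∧ h ≤ P.len ∧ P.l (h + 1) < P.l h := by
  simp only [colSet, Finset.mem_filter, Finset.mem_Icc]
  tauto

/-- For every part value `i` there is a column index `h` (last row of value `i`)
with `l h = i` and a strict descent after it. -/
lemma exists_col (P : PartitionData) {i : ℕ} (hi : i ∈ P.partsSet) :
    ∃ h, h ∈ colSet P ∧ P.l h = i := by
  obtain ⟨a, ha1, ha2, ha3⟩ := (P.mem_partsSet).mp hi
  set F := (Finset.Icc 1 P.len).filter (fun j => P.l j = i) with hF
  have hne : F.Nonempty := ⟨a, by simp [hF, ha3]; omega⟩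
  set h := F.max' hne with hh
  have hmem : h ∈ F := F.max'_mem hne
  simp only [hF, Finset.mem_filter, Finset.mem_Icc] at hmem
  have hipos : 0 < i := P.partsSet_pos hi
  have hdesc : P.l (h + 1) < P.l h := by
    rcases Nat.lt_or_ge P.len (h + 1) with hc | hc
    · rw [P.l_zero_of_gt hc]; omega
    · by_contra hcon
      have hle : P.l (h + 1) ≤ P.l h := P.anti h (by omega)
      have heq : P.l (h + 1) = i := by omega
      have : h + 1 ∈ F := by simp [hF, heq]; omega
      have := F.le_max' _ this
      omega
  exact ⟨h, (mem_colSet_iff P).mpr ⟨hmem.1.1, hmem.1.2, hdesc⟩, hmem.2⟩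

lemma consec_succ (P : PartitionData)
    (hdist : ∀ j, 1 ≤ j → P.l j - P.l (j + 1) ≤ 1)
    {i j : ℕ} (h : Consec P i j) : i = j + 1 := by
  obtain ⟨hi, hj, hlt, hbet⟩ := h
  obtain ⟨h0, hcol, hval⟩ := exists_col P hi
  rw [mem_colSet_iff] at hcol
  have hjpos : 0 < j := P.partsSet_pos hj
  have h1 : P.l (h0 + 1) = i - 1 := by
    have := hdist h0 hcol.1
    omega
  by_contra hne
  have hmem : i - 1 ∈ P.partsSet := by
    rw [P.mem_partsSet]
    refine ⟨h0 + 1, by omega, ?_, h1⟩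
    have := (P.pos (h0 + 1) (by omega)).mp (by omega)
    omega
  exact hbet _ hmem ⟨by omega, by omega⟩

lemma min_part_eq_one (P : PartitionData)
    (hdist : ∀ j, 1 ≤ j → P.l j - P.l (j + 1) ≤ 1)
    {j : ℕ} (h : IsMinPart P j) : j = 1 := by
  obtain ⟨hj, hmin⟩ := h
  obtain ⟨a, ha1, ha2, _⟩ := (P.mem_partsSet).mp hj
  have hlen : 1 ≤ P.len := by omega
  have hlpos : 0 < P.l P.len := (P.pos P.len hlen).mpr le_rfl
  have hmem : P.l P.len ∈ P.partsSet := (P.mem_partsSet).mpr ⟨P.len, hlen, le_rfl, rfl⟩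
  have := hmin _ hmem
  have h0 : P.l (P.len + 1) = 0 := P.l_zero_of_gt (by omega)
  have := hdist P.len hlen
  have := P.partsSet_pos hj
  omega

/-- Key sum computation: for any admissible `f` fixed at half-multiplicity on
odd parts, the plus- and minus-sums both equal `p`. -/
lemma plus_minus_sum (P : PartitionData) (p : ℕ) (hn : P.boxSum = p + p)
    (f : ℕ → ℕ) (hf : ∀ i, f i ≤ P.mult i)
    (hodd : ∀ i, Odd i → 2 * f i = P.mult i) :
    (∑ i ∈ P.partsSet, (f i * ((i + 1) / 2) + (P.mult i - f i) * (i / 2)) = p) ∧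
    (∑ i ∈ P.partsSet, (f i * (i / 2) + (P.mult i - f i) * ((i + 1) / 2)) = p) := by
  have hpm : ∀ i ∈ P.partsSet,
      f i * ((i + 1) / 2) + (P.mult i - f i) * (i / 2)
        = f i * (i / 2) + (P.mult i - f i) * ((i + 1) / 2) := by
    intro i _
    rcases Nat.even_or_odd i with he | ho
    · have : (i + 1) / 2 = i / 2 := by
        obtain ⟨t, ht⟩ := he; omega
      rw [this]
    · have h2 : P.mult i - f i = f i := by have := hodd i ho; omega
      rw [h2]; ring
  have htot : (∑ i ∈ P.partsSet, (f i * ((i + 1) / 2) + (P.mult i - f i) * (i / 2)))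
      + (∑ i ∈ P.partsSet, (f i * (i / 2) + (P.mult i - f i) * ((i + 1) / 2)))
      = p + p := by
    rw [← Finset.sum_add_distrib, ← hn, P.boxSum_eq]
    apply Finset.sum_congr rfl
    intro i _
    obtain ⟨g, hg⟩ : ∃ g, P.mult i = f i + g := ⟨P.mult i - f i, by have := hf i; omega⟩
    have hsub : P.mult i - f i = g := by omega
    rw [hsub, hg]
    have hab : (i + 1) / 2 + i / 2 = i := by omega
    calc f i * ((i + 1) / 2) + g * (i / 2) + (f i * (i / 2) + g * ((i + 1) / 2))
        = (f i + g) * ((i + 1) / 2 + i / 2) := by ring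
      _ = (f i + g) * i := by rw [hab]
  rw [Finset.sum_congr rfl hpm] at htot ⊢
  omega

lemma SYD.f_eq {P : PartitionData} {p q : ℕ} {T T' : SYD P p q} (h : T.f = T'.f) :
    T = T' := by
  cases T; cases T'; simp_all

/-- On odd parts, a CI diagram is determined. -/
lemma SYD.IsCI.f_odd_eq {P : PartitionData} {p q : ℕ} {T T' : SYD P p q}
    (hT : T.IsCI) (hT' : T'.IsCI) {i : ℕ} (hi : Odd i) : T.f i = T'.f i := by
  have h1 := hT.2 i hi
  have h2 := hT'.2 i hi
  omega


/-- The underlying function of the CI diagram built from a choice `g` on even parts. -/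
def ciF (P : PartitionData)
    (g : (i : (P.partsSet.filter (fun i => Even i) : Finset ℕ)) → Fin (P.mult i + 1)) :
    ℕ → ℕ :=
  fun i => if h : i ∈ P.partsSet.filter (fun i => Even i) then (g ⟨i, h⟩ : ℕ) else P.mult i / 2

lemma ciF_le (P : PartitionData) (g) : ∀ i, ciF P g i ≤ P.mult i := by
  intro i
  rw [ciF]
  split
  · exact Nat.lt_succ_iff.mp (g _).isLt
  · exact Nat.div_le_self _ _

lemma ciF_odd (P : PartitionData) (hmult : ∀ i, Odd i → Even (P.mult i)) (g) :
    ∀ i, Odd i → 2 * ciF P g i = P.mult i := by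
  intro i hi
  rw [ciF, dif_neg (by simp [Nat.not_even_iff_odd]; intro _; exact hi)]
  obtain ⟨t, ht⟩ := hmult i hi
  omega

/-- The CI diagrams are parametrized by a free choice at each even part. -/
noncomputable def ciEquiv (P : PartitionData) (p : ℕ) (hn : P.boxSum = p + p)
    (hmult : ∀ i, Odd i → Even (P.mult i)) :
    {T : SYD P p p // T.IsCI} ≃
      ((i : (P.partsSet.filter (fun i => Even i) : Finset ℕ)) → Fin (P.mult i + 1)) where
  toFun T i := ⟨T.1.f i, Nat.lt_succ_of_le (T.1.le_mult i)⟩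
  invFun g :=
    ⟨⟨ciF P g, ciF_le P g,
      (plus_minus_sum P p hn (ciF P g) (ciF_le P g) (ciF_odd P hmult g)).1,
      (plus_minus_sum P p hn (ciF P g) (ciF_le P g) (ciF_odd P hmult g)).2⟩,
      rfl, ciF_odd P hmult g⟩
  left_inv T := by
    apply Subtype.ext
    apply SYD.f_eq
    funext i
    dsimp only
    rw [ciF]
    split
    · rfl
    · rename_i hnot
      rcases Nat.even_or_odd i with he | ho
      · have hni : i ∉ P.partsSet := by
          intro hmem
          exact hnot (Finset.mem_filter.mpr ⟨hmem, he⟩)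
        have h0 := P.mult_eq_zero hni
        have := T.1.le_mult i
        omega
      · have := T.2.2 i ho
        omega
  right_inv g := by
    funext i
    apply Fin.ext
    show ciF P g i.1 = (g i : ℕ)
    rw [ciF, dif_pos i.2]

/-- Type CI: for `λ` a partition of `2p` with every odd part of even
multiplicity and with distinct column lengths `0 = k_0 < k_1 < ⋯ < k_m`, the
graph `Γ_CI(λ;p,p)` has no edges, so its number of connected components equals
`#syd_CI(λ;p,p)`, which is `∏_{s : λ_{k_s} even} (1 + k_s - k_{s-1})`. -/
theorem stmt16 (P : PartitionData) (p m : ℕ) (k : ℕ → ℕ)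
    (hn : P.boxSum = p + p)
    (hmult : ∀ i, Odd i → Even (P.mult i))
    (hdist : ∀ j, 1 ≤ j → P.l j - P.l (j + 1) ≤ 1)
    (hk0 : k 0 = 0) (hkmono : StrictMonoOn k (Set.Icc 0 m))
    (hkim : (Finset.Icc 1 m).image k = colSet P) :
    orbitGraphX P p p 1 SYD.IsCI = ⊥ ∧
    Nat.card (orbitGraphX P p p 1 SYD.IsCI).ConnectedComponent =
      Nat.card {T : SYD P p p // T.IsCI} ∧
    Nat.card {T : SYD P p p // T.IsCI} =
      ∏ s ∈ (Finset.Icc 1 m).filter (fun s => Even (P.l (k s))),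
        (1 + (k s - k (s - 1))) := by
  -- Part 1: the graph has no edges.
  have hno : ∀ (T T' : SYD P p p), T.IsCI → T'.IsCI → ¬ AdjRel P 1 T T' := by
    rintro T T' hT hT' (⟨i, j, hc, _, hor⟩ | ⟨j, hmin, _, hor⟩)
    · have hij := consec_succ P hdist hc
      rcases Nat.even_or_odd j with he | ho
      · have hoi : Odd i := by rw [hij]; exact Even.add_one he
        have := SYD.IsCI.f_odd_eq hT hT' hoi
        omega
      · have := SYD.IsCI.f_odd_eq hT hT' ho
        omega
    · have hj := min_part_eq_one P hdist hmin
      have hoj : Odd j := by rw [hj]; exact odd_one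
      have := SYD.IsCI.f_odd_eq hT hT' hoj
      omega
  have hbot : orbitGraphX P p p 1 SYD.IsCI = ⊥ := by
    apply SimpleGraph.ext
    funext a b
    simp only [orbitGraphX, SimpleGraph.fromRel_adj, SimpleGraph.bot_adj, eq_iff_iff,
      iff_false, not_and, not_or]
    intro _
    exact ⟨hno a.1 b.1 a.2 b.2, hno b.1 a.1 b.2 a.2⟩
  refine ⟨hbot, ?_, ?_⟩
  · -- Part 2: components of the empty graph are the vertices.
    rw [hbot]
    symm
    apply Nat.card_eq_of_bijective
      (⊥ : SimpleGraph {T : SYD P p p // T.IsCI}).connectedComponentMk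
    constructor
    · intro a b hab
      exact SimpleGraph.reachable_bot.mp (SimpleGraph.ConnectedComponent.eq.mp hab)
    · intro c
      exact c.exists_rep
  · -- Part 3: counting.
    have hcard : Nat.card {T : SYD P p p // T.IsCI}
        = ∏ i ∈ P.partsSet.filter (fun i => Even i), (P.mult i + 1) := by
      rw [Nat.card_congr (ciEquiv P p hn hmult), Nat.card_pi]
      rw [← Finset.prod_coe_sort (P.partsSet.filter (fun i => Even i))
        (fun i => P.mult i + 1)]
      apply Finset.prod_congr rfl
      intro i _
      rw [Nat.card_eq_fintype_card, Fintype.card_fin]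
    rw [hcard]
    -- Part 4: reindex the product by the column lengths.
    have hkmem : ∀ s, 1 ≤ s → s ≤ m → k s ∈ colSet P := by
      intro s hs1 hsm
      rw [← hkim]
      exact Finset.mem_image_of_mem k (Finset.mem_Icc.mpr ⟨hs1, hsm⟩)
    have hklt : ∀ s t, s < t → t ≤ m → k s < k t := by
      intro s t hst htm
      exact hkmono (Set.mem_Icc.mpr ⟨Nat.zero_le _, by omega⟩)
        (Set.mem_Icc.mpr ⟨Nat.zero_le _, htm⟩) hst
    have hconst : ∀ s, 1 ≤ s → s ≤ m → ∀ d j, k (s-1) < j → j + d = k s →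
        P.l j = P.l (k s) := by
      intro s hs1 hsm d
      induction d with
      | zero =>
        intro j hj hjd
        rw [show j = k s by omega]
      | succ n ih =>
        intro j hj hjd
        have hnext : P.l (j+1) = P.l (k s) := ih (j+1) (by omega) (by omega)
        rw [← hnext]
        have hle : P.l (j+1) ≤ P.l j := P.anti j (by omega)
        by_contra hne
        have hdesc : P.l (j+1) < P.l j := by omega
        have hjcol : j ∈ colSet P := by
          rw [mem_colSet_iff]
          exact ⟨by omega, (P.pos j (by omega)).mp (by omega), hdesc⟩
        rw [← hkim] at hjcol
        obtain ⟨t, ht, hkt⟩ := Finset.mem_image.mp hjcol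
        simp only [Finset.mem_Icc] at ht
        rcases Nat.lt_or_ge t s with h1 | h1
        · have : k t ≤ k (s-1) := by
            rcases Nat.eq_or_lt_of_le (by omega : t ≤ s - 1) with he | hl
            · rw [he]
            · exact le_of_lt (hklt t (s-1) hl (by omega))
          omega
        · have : k s ≤ k t := by
            rcases Nat.eq_or_lt_of_le h1 with he | hl
            · rw [he]
            · exact le_of_lt (hklt s t hl ht.2)
          omega
    have hmultk : ∀ s, 1 ≤ s → s ≤ m → P.mult (P.l (k s)) = k s - k (s-1) := by
      intro s hs1 hsm
      have hks := (mem_colSet_iff P).mp (hkmem s hs1 hsm)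
      have hks1 : k (s-1) < k s := by
        have := hklt (s-1) s (by omega) hsm
        exact this
      have hset : (Finset.Icc 1 P.len).filter (fun j => P.l j = P.l (k s))
          = Finset.Ioc (k (s-1)) (k s) := by
        ext j
        simp only [Finset.mem_filter, Finset.mem_Icc, Finset.mem_Ioc]
        constructor
        · rintro ⟨⟨hj1, hj2⟩, hval⟩
          constructor
          · by_contra hc
            push_neg at hc
            have hs1' : 1 ≤ s - 1 := by
              by_contra h0
              have h00 : s - 1 = 0 := by omega
              rw [h00, hk0] at hc
              omega
            have hcol' := (mem_colSet_iff P).mp (hkmem (s-1) hs1' (by omega))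
            have h1 : P.l (k (s-1)) ≤ P.l j := P.l_anti' j (k (s-1)) (by omega) hc
            have h2 : P.l (k s) ≤ P.l (k (s-1) + 1) :=
              P.l_anti' (k (s-1) + 1) (k s) (by omega) (by omega)
            omega
          · by_contra hc
            push_neg at hc
            have h3 : P.l j ≤ P.l (k s + 1) := P.l_anti' (k s + 1) j (by omega) (by omega)
            omega
        · rintro ⟨hj1, hj2⟩
          exact ⟨⟨by omega, by omega⟩, hconst s hs1 hsm (k s - j) j hj1 (by omega)⟩
      rw [PartitionData.mult, hset, Nat.card_Ioc]
    have hlinj : ∀ s t, 1 ≤ s → s < t → t ≤ m → P.l (k t) < P.l (k s) := by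
      intro s t hs1 hst htm
      have hks := (mem_colSet_iff P).mp (hkmem s hs1 (by omega))
      have hkst : k s < k t := hklt s t hst htm
      have := P.l_anti' (k s + 1) (k t) (by omega) (by omega)
      omega
    symm
    apply Finset.prod_bij (fun s _ => P.l (k s))
    · intro s hs
      simp only [Finset.mem_filter, Finset.mem_Icc] at hs
      refine Finset.mem_filter.mpr ⟨?_, hs.2⟩
      have hks := (mem_colSet_iff P).mp (hkmem s hs.1.1 hs.1.2)
      exact (P.mem_partsSet).mpr ⟨k s, hks.1, hks.2.1, rfl⟩
    · intro a ha b hb hab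
      simp only [Finset.mem_filter, Finset.mem_Icc] at ha hb
      by_contra hne
      rcases Nat.lt_or_ge a b with h | h
      · have := hlinj a b ha.1.1 h hb.1.2
        omega
      · have := hlinj b a hb.1.1 (by omega) ha.1.2
        omega
    · intro i hi
      simp only [Finset.mem_filter] at hi
      obtain ⟨h0, hcol, hval⟩ := exists_col P hi.1
      rw [← hkim] at hcol
      obtain ⟨s, hs, hks⟩ := Finset.mem_image.mp hcol
      refine ⟨s, ?_, by rw [hks, hval]⟩
      simp only [Finset.mem_filter, Finset.mem_Icc] at hs ⊢
      rw [hks, hval]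
      exact ⟨hs, hi.2⟩
    · intro s hs
      simp only [Finset.mem_filter, Finset.mem_Icc] at hs
      rw [hmultk s hs.1.1 hs.1.2]
      omega
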